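/- arXiv:2210.05707 — 3 statements merged into one kernel-verified Lean document; each statement's English description precedes it below -/
import Mathlib

section
/- For any A ∈ ℂ^{K×K} and any binary matrix M ∈ {0,1}^{K×K}, one has the identity ∑_{ρ ∈ S_K} sgn(ρ) · det((P_ρ A) ⊙ M) = |G_M| · det(A), where the sum is over all permutations ρ of {1,…,K}. -/
noncomputable section

/-- The permutation matrix `P_ρ` with `(P_ρ)_{k,ℓ} = 1` iff `ℓ = ρ(k)`, so that the
`k`-th row of `P_ρ * A` is the `ρ(k)`-th row of `A`. -/
def permMat {K : ℕ} (ρ : Equiv.Perm (Fin K)) : Matrix (Fin K) (Fin K) ℂ :=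
  Matrix.of fun k l => if l = ρ k then 1 else 0

/-- For any `A ∈ ℂ^{K×K}` and binary `M ∈ {0,1}^{K×K}`,
`∑_{ρ ∈ S_K} sgn(ρ) · det((P_ρ A) ⊙ M) = |G_M| · det A`, where `G_M` is the set of
permutations `σ` with `M_{k,σ(k)} = 1` for all `k`. -/
theorem stmt_4 (K : ℕ) (A M : Matrix (Fin K) (Fin K) ℂ)
    (hM : ∀ k l, M k l = 0 ∨ M k l = 1) :
    ∑ ρ : Equiv.Perm (Fin K),
        ((Equiv.Perm.sign ρ : ℤ) : ℂ) * (Matrix.hadamard (permMat ρ * A) M).det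
      = ((Finset.univ.filter fun σ : Equiv.Perm (Fin K) => ∀ k, M k (σ k) = 1).card : ℂ)
          * A.det := by
  classical
  have hdet : ∀ B : Matrix (Fin K) (Fin K) ℂ,
      B.det = ∑ σ : Equiv.Perm (Fin K), ((Equiv.Perm.sign σ : ℤ) : ℂ) * ∏ i, B i (σ i) := by
    intro B
    rw [← Matrix.det_transpose, Matrix.det_apply']
    rfl
  have hPA : ∀ (ρ : Equiv.Perm (Fin K)) (k j : Fin K), (permMat ρ * A) k j = A (ρ k) j := by
    intro ρ k j
    simp [permMat, Matrix.mul_apply]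
  have hsq : ∀ σ : Equiv.Perm (Fin K),
      ((Equiv.Perm.sign σ : ℤ) : ℂ) * ((Equiv.Perm.sign σ : ℤ) : ℂ) = 1 := by
    intro σ
    rw [← Int.cast_mul, ← Units.val_mul, Int.units_mul_self]
    norm_num
  calc
    ∑ ρ : Equiv.Perm (Fin K),
        ((Equiv.Perm.sign ρ : ℤ) : ℂ) * (Matrix.hadamard (permMat ρ * A) M).det
      = ∑ ρ : Equiv.Perm (Fin K), ∑ σ : Equiv.Perm (Fin K),
          ((Equiv.Perm.sign ρ : ℤ) : ℂ) * (((Equiv.Perm.sign σ : ℤ) : ℂ) *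
            ((∏ i, A (ρ i) (σ i)) * ∏ i, M i (σ i))) := by
        refine Finset.sum_congr rfl fun ρ _ => ?_
        rw [hdet, Finset.mul_sum]
        refine Finset.sum_congr rfl fun σ _ => ?_
        congr 1
        congr 1
        rw [← Finset.prod_mul_distrib]
        refine Finset.prod_congr rfl fun i _ => ?_
        simp [Matrix.hadamard, hPA]
    _ = ∑ σ : Equiv.Perm (Fin K), (∏ i, M i (σ i)) *
          (((Equiv.Perm.sign σ : ℤ) : ℂ) *
            ∑ ρ : Equiv.Perm (Fin K), ((Equiv.Perm.sign ρ : ℤ) : ℂ) * ∏ i, A (ρ i) (σ i)) := by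
        rw [Finset.sum_comm]
        refine Finset.sum_congr rfl fun σ _ => ?_
        rw [Finset.mul_sum, Finset.mul_sum]
        refine Finset.sum_congr rfl fun ρ _ => ?_
        ring
    _ = ∑ σ : Equiv.Perm (Fin K), (∏ i, M i (σ i)) * A.det := by
        refine Finset.sum_congr rfl fun σ _ => ?_
        congr 1
        have hre : ∑ ρ : Equiv.Perm (Fin K), ((Equiv.Perm.sign ρ : ℤ) : ℂ) * ∏ i, A (ρ i) (σ i)
            = ∑ τ : Equiv.Perm (Fin K),
                ((Equiv.Perm.sign (τ * σ) : ℤ) : ℂ) * ∏ i, A ((τ * σ) i) (σ i) := by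
          exact (Equiv.sum_comp (Equiv.mulRight σ)
            (fun ρ => ((Equiv.Perm.sign ρ : ℤ) : ℂ) * ∏ i, A (ρ i) (σ i))).symm
        rw [hre]
        have : ∀ τ : Equiv.Perm (Fin K),
            ((Equiv.Perm.sign (τ * σ) : ℤ) : ℂ) * ∏ i, A ((τ * σ) i) (σ i)
            = ((Equiv.Perm.sign σ : ℤ) : ℂ) *
              (((Equiv.Perm.sign τ : ℤ) : ℂ) * ∏ i, A (τ i) i) := by
          intro τ
          have hp : ∏ i, A ((τ * σ) i) (σ i) = ∏ i, A (τ i) i := by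
            exact Equiv.prod_comp σ (fun j => A (τ j) j)
          rw [hp, Equiv.Perm.sign_mul]
          push_cast
          ring
        rw [Finset.sum_congr rfl fun τ _ => this τ, ← Finset.mul_sum, ← Matrix.det_apply']
        rw [← mul_assoc, hsq, one_mul]
    _ = ((Finset.univ.filter fun σ : Equiv.Perm (Fin K) => ∀ k, M k (σ k) = 1).card : ℂ)
          * A.det := by
        rw [← Finset.sum_mul]
        congr 1
        have : ∀ σ : Equiv.Perm (Fin K), (∏ i, M i (σ i)) =
            if (∀ k, M k (σ k) = 1) then (1 : ℂ) else 0 := by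
          intro σ
          by_cases h : ∀ k, M k (σ k) = 1
          · simp [h]
          · push_neg at h
            obtain ⟨k, hk⟩ := h
            have hk0 : M k (σ k) = 0 := (hM k (σ k)).resolve_right hk
            rw [if_neg]
            · exact Finset.prod_eq_zero (Finset.mem_univ k) hk0
            · push_neg; exact ⟨k, hk⟩
        rw [Finset.sum_congr rfl fun σ _ => this σ]
        simp [Finset.sum_boole]
end
end

section
/- Let N ≥ 5 be an integer, and set I_1 = [0, (N−2)/N), I_2 = [(N−2)/N, (N−1)/N), I_3 = [(N−1)/N, 1), Λ_1 = ⋃_{k=0}^{N−3}(Nℤ+k), Λ_2 = Nℤ+(N−2), Λ_3 = Nℤ+(N−1), and S_k = [0,1)∖I_k for k = 1,2,3. Then the system E(S_1,Λ_1) ∪ E(S_2,Λ_2) ∪ E(S_3,Λ_3) is not complete in L²[0,1): there exists a nonzero f ∈ L²[0,1) orthogonal to every function e^{2πiλ(·)}χ_{S_k} with λ ∈ Λ_k, k = 1,2,3. -/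
open MeasureTheory Complex Real Set
open scoped Classical

noncomputable section

/-- Lebesgue measure restricted to `[0,1)`. -/
def μ01 : MeasureTheory.Measure ℝ := MeasureTheory.volume.restrict (Set.Ico (0:ℝ) 1)

/-- The Hilbert space `L²[0,1)` of complex square-integrable functions on `[0,1)`. -/
abbrev L2 : Type := MeasureTheory.Lp ℂ 2 μ01

/-- A function on ℝ as an element of `L²[0,1)` (junk value `0` if not in `L²`). -/
def toL2 (f : ℝ → ℂ) : L2 :=
  if h : MeasureTheory.MemLp f 2 μ01 then h.toLp f else 0

/-- The function `x ↦ e^{2πiλx} · χ_S(x)` as an element of `L²[0,1)`. -/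
def expChar (S : Set ℝ) (lam : ℝ) : L2 :=
  toL2 (S.indicator fun x => Complex.exp (2 * Real.pi * lam * x * Complex.I))

/-- `L²(S)` viewed as the subset of `L²[0,1)` of elements vanishing a.e. outside `S`. -/
def L2on (S : Set ℝ) : Set L2 := {g : L2 | ∀ᵐ x ∂μ01, x ∉ S → g x = 0}

/-- A family is a Riesz sequence: there are `0 < A ≤ B` giving a two-sided ℓ²-norm
equivalence on (finite) linear combinations. -/
def IsRieszSequence {ι : Type*} (f : ι → L2) : Prop :=
  ∃ A B : ℝ, 0 < A ∧ A ≤ B ∧ ∀ c : ι →₀ ℂ,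
    A * ∑ i ∈ c.support, ‖c i‖ ^ 2 ≤ ‖∑ i ∈ c.support, c i • f i‖ ^ 2 ∧
    ‖∑ i ∈ c.support, c i • f i‖ ^ 2 ≤ B * ∑ i ∈ c.support, ‖c i‖ ^ 2

/-- A family is a Riesz basis for the subspace of `L²[0,1)` given by the subset `V`:
it is a Riesz sequence whose closed linear span is `V`. -/
def IsRieszBasis {ι : Type*} (f : ι → L2) (V : Set L2) : Prop :=
  IsRieszSequence f ∧ closure (↑(Submodule.span ℂ (Set.range f)) : Set L2) = V

instance : IsFiniteMeasure μ01 := by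
  constructor
  rw [μ01, Measure.restrict_apply_univ, Real.volume_Ico]
  norm_num

lemma inner_toL2 (g f : ℝ → ℂ) (hg : MeasureTheory.MemLp g 2 μ01)
    (hf : MeasureTheory.MemLp f 2 μ01) :
    (inner ℂ (toL2 g) (toL2 f) : ℂ) = ∫ x, (starRingEnd ℂ) (g x) * f x ∂μ01 := by
  rw [toL2, toL2, dif_pos hg, dif_pos hf, MeasureTheory.L2.inner_def]
  apply integral_congr_ae
  filter_upwards [hg.coeFn_toLp, hf.coeFn_toLp] with x hx hy
  rw [hx, hy, RCLike.inner_apply, mul_comm]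

lemma memℒp_expChar_aux (S : Set ℝ) (hS : MeasurableSet S) (lam : ℝ) :
    MeasureTheory.MemLp (S.indicator fun x => Complex.exp (2 * Real.pi * lam * x * Complex.I))
      2 μ01 := by
  apply MeasureTheory.MemLp.of_bound
    (AEStronglyMeasurable.indicator (Continuous.aestronglyMeasurable (by continuity)) hS) 1
  apply Filter.Eventually.of_forall; intro x
  calc ‖S.indicator (fun x => Complex.exp (2 * Real.pi * lam * x * Complex.I)) x‖
      ≤ ‖Complex.exp (2 * Real.pi * lam * x * Complex.I)‖ := norm_indicator_le_norm_self _ x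
    _ = 1 := by
        rw [show (2 * (Real.pi:ℂ) * lam * x * Complex.I) = ((2 * Real.pi * lam * x : ℝ):ℂ) * Complex.I by push_cast; ring]
        exact Complex.norm_exp_ofReal_mul_I _

def omga (N : ℕ) : ℂ := Complex.exp (2 * Real.pi * Complex.I / N)

def fw (N : ℕ) : ℝ → ℂ := fun x =>
  (Set.Ico (0:ℝ) (1/N)).indicator (fun _ => (omga N)^3) x +
  (Set.Ico ((1:ℝ)/N) (2/N)).indicator (fun _ => -(omga N + (omga N)^2)) x +
  (Set.Ico ((2:ℝ)/N) (3/N)).indicator (fun _ => (1:ℂ)) x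

lemma memℒp_fw (N : ℕ) : MeasureTheory.MemLp (fw N) 2 μ01 := by
  apply MeasureTheory.MemLp.add
  apply MeasureTheory.MemLp.add
  all_goals exact memLp_indicator_const 2 measurableSet_Ico _ (Or.inr (measure_ne_top _ _))

lemma ind_mul {S T : Set ℝ} (h : T ⊆ S) (E : ℝ → ℂ) (d : ℂ) (x : ℝ) :
    S.indicator E x * T.indicator (fun _ => d) x = T.indicator (fun y => d * E y) x := by
  by_cases hx : x ∈ T
  · simp [Set.indicator_of_mem, hx, h hx, mul_comm]
  · simp [Set.indicator_of_notMem, hx]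

lemma conj_e (r x : ℝ) :
    (starRingEnd ℂ) (Complex.exp (2 * Real.pi * r * x * Complex.I))
      = Complex.exp (-(2 * Real.pi * r) * Complex.I * x) := by
  rw [← Complex.exp_conj]
  congr 1
  simp only [map_mul, Complex.conj_ofReal, Complex.conj_I, map_ofNat]
  push_cast
  ring

lemma fw_eq_zero (N : ℕ) (hN : 5 ≤ N) {x : ℝ} (hx : 3 / (N:ℝ) ≤ x) : fw N x = 0 := by
  have hN0 : (0:ℝ) < N := by positivity
  have h1 : (1:ℝ)/N ≤ 3/N := by gcongr; norm_num
  have h2 : (2:ℝ)/N ≤ 3/N := by gcongr; norm_num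
  simp only [fw, Set.indicator_apply, Set.mem_Ico]
  rw [if_neg (by push_neg; intro _; linarith), if_neg (by push_neg; intro _; linarith),
    if_neg (by push_neg; intro _; linarith)]
  ring

lemma integrable_piece (a b : ℝ) (d cc : ℂ) :
    MeasureTheory.Integrable ((Set.Ico a b).indicator (fun y => d * Complex.exp (cc * y))) μ01 := by
  apply MeasureTheory.Integrable.indicator _ measurableSet_Ico
  have h : MeasureTheory.IntegrableOn (fun y : ℝ => d * Complex.exp (cc * y)) (Set.Icc 0 1) :=
    Continuous.integrableOn_Icc (by continuity)
  exact h.mono_set Set.Ico_subset_Icc_self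


lemma exp_alpha (N : ℕ) (hN : 5 ≤ N) (n : ℤ) (j : ℕ) (hj : n % (N:ℤ) = (N:ℤ) - j) :
    Complex.exp (-(2 * Real.pi * (n:ℂ)) * Complex.I / N) = (omga N) ^ j := by
  have hNne : ((N:ℂ)) ≠ 0 := by
    simp only [ne_eq, Nat.cast_eq_zero]; omega
  have hn : (n:ℂ) = (N:ℂ) * ((n / (N:ℤ) : ℤ):ℂ) + ((N:ℂ) - (j:ℂ)) := by
    have h := Int.mul_ediv_add_emod n (N:ℤ)
    rw [hj] at h
    have : (((N:ℤ) * (n / ↑N) + (↑N - ↑j) : ℤ) : ℂ) = (n:ℂ) := by exact_mod_cast congrArg (Int.cast : ℤ → ℂ) h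
    push_cast at this
    exact this.symm
  have key : -(2 * Real.pi * (n:ℂ)) * Complex.I / N
      = (j:ℂ) * (2 * Real.pi * Complex.I / N) + ((-(n / (N:ℤ)) - 1 : ℤ):ℂ) * (2 * Real.pi * Complex.I) := by
    push_cast
    rw [hn]
    field_simp
    ring
  rw [key, Complex.exp_add, Complex.exp_int_mul_two_pi_mul_I, mul_one, Complex.exp_nat_mul, omga]


lemma integral_key (N : ℕ) (hN : 5 ≤ N) (n : ℤ) (hn : n ≠ 0) (S : Set ℝ)
    (hS : Set.Ico (0:ℝ) (3/N) ⊆ S) :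
    (∫ x, (starRingEnd ℂ)
        (S.indicator (fun x => Complex.exp (2 * Real.pi * ((n:ℝ):ℝ) * x * Complex.I)) x)
        * fw N x ∂μ01)
    = ((omga N)^3 * (Complex.exp (-(2 * Real.pi * (n:ℂ)) * Complex.I / N) - 1)
      + (-(omga N + (omga N)^2)) * (Complex.exp (-(2 * Real.pi * (n:ℂ)) * Complex.I / N) ^ 2
          - Complex.exp (-(2 * Real.pi * (n:ℂ)) * Complex.I / N))
      + (Complex.exp (-(2 * Real.pi * (n:ℂ)) * Complex.I / N) ^ 3
          - Complex.exp (-(2 * Real.pi * (n:ℂ)) * Complex.I / N) ^ 2))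
      / (-(2 * Real.pi * (n:ℂ)) * Complex.I) := by
  have hN0 : (0:ℝ) < N := by positivity
  have hN5 : (5:ℝ) ≤ N := by exact_mod_cast hN
  set cc : ℂ := -(2 * Real.pi * (n:ℂ)) * Complex.I with hcc
  have hccne : cc ≠ 0 := by
    have h1 : ((n:ℂ)) ≠ 0 := Int.cast_ne_zero.mpr hn
    simp [hcc, Real.pi_ne_zero, Complex.I_ne_zero, h1]
  -- subsets
  have hsub1 : Set.Ico (0:ℝ) (1/N) ⊆ S := fun x hx => hS ⟨hx.1, lt_of_lt_of_le hx.2 (by gcongr; norm_num)⟩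
  have hsub2 : Set.Ico ((1:ℝ)/N) (2/N) ⊆ S := fun x hx =>
    hS ⟨le_trans (by positivity) hx.1, lt_of_lt_of_le hx.2 (by gcongr; norm_num)⟩
  have hsub3 : Set.Ico ((2:ℝ)/N) (3/N) ⊆ S := fun x hx =>
    hS ⟨le_trans (by positivity) hx.1, hx.2⟩
  -- pointwise identity
  have hpt : ∀ x : ℝ, (starRingEnd ℂ)
        (S.indicator (fun x => Complex.exp (2 * Real.pi * ((n:ℝ):ℝ) * x * Complex.I)) x)
        * fw N x
      = (Set.Ico (0:ℝ) (1/N)).indicator (fun y => (omga N)^3 * Complex.exp (cc * y)) x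
        + (Set.Ico ((1:ℝ)/N) (2/N)).indicator
            (fun y => (-(omga N + (omga N)^2)) * Complex.exp (cc * y)) x
        + (Set.Ico ((2:ℝ)/N) (3/N)).indicator (fun y => (1:ℂ) * Complex.exp (cc * y)) x := by
    intro x
    have hconj : (starRingEnd ℂ)
        (S.indicator (fun x => Complex.exp (2 * Real.pi * ((n:ℝ):ℝ) * x * Complex.I)) x)
        = S.indicator (fun y => Complex.exp (cc * y)) x := by
      by_cases hx : x ∈ S
      · rw [Set.indicator_of_mem hx, Set.indicator_of_mem hx, conj_e]
        push_cast
        rw [hcc]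
      · rw [Set.indicator_of_notMem hx, Set.indicator_of_notMem hx, map_zero]
    rw [hconj, fw, mul_add, mul_add, ind_mul hsub1, ind_mul hsub2, ind_mul hsub3]
  rw [integral_congr_ae (Filter.Eventually.of_forall hpt)]
  have hI1 := integrable_piece 0 (1/N) ((omga N)^3) cc
  have hI2 := integrable_piece ((1:ℝ)/N) (2/N) (-(omga N + (omga N)^2)) cc
  have hI3 := integrable_piece ((2:ℝ)/N) (3/N) (1:ℂ) cc
  have hI12 : MeasureTheory.Integrable (fun a =>
      (Set.Ico (0:ℝ) (1/N)).indicator (fun y => (omga N)^3 * Complex.exp (cc * y)) a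
      + (Set.Ico ((1:ℝ)/N) (2/N)).indicator
          (fun y => (-(omga N + (omga N)^2)) * Complex.exp (cc * y)) a) μ01 := hI1.add hI2
  rw [integral_add hI12 hI3, integral_add hI1 hI2]
  -- compute each piece
  have hpiece : ∀ a b : ℝ, 0 ≤ a → a ≤ b → b ≤ 1 → ∀ d : ℂ,
      (∫ x, (Set.Ico a b).indicator (fun y => d * Complex.exp (cc * y)) x ∂μ01)
        = d * ((Complex.exp (cc * b) - Complex.exp (cc * a)) / cc) := by
    intro a b ha hab hb1 d
    rw [MeasureTheory.integral_indicator measurableSet_Ico]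
    have : μ01.restrict (Set.Ico a b) = MeasureTheory.volume.restrict (Set.Ico a b) := by
      rw [μ01, Measure.restrict_restrict measurableSet_Ico,
        Set.inter_eq_left.mpr (Set.Ico_subset_Ico ha hb1)]
    rw [this, restrict_Ico_eq_restrict_Ioc, ← intervalIntegral.integral_of_le hab,
      intervalIntegral.integral_const_mul, integral_exp_mul_complex hccne]
  rw [hpiece 0 (1/N) le_rfl (by positivity) (by rw [div_le_one hN0]; linarith) _,
    hpiece ((1:ℝ)/N) (2/N) (by positivity) (by gcongr; norm_num) (by rw [div_le_one hN0]; linarith) _,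
    hpiece ((2:ℝ)/N) (3/N) (by positivity) (by gcongr; norm_num) (by rw [div_le_one hN0]; linarith) _]
  have e0 : Complex.exp (cc * ((0:ℝ):ℂ)) = 1 := by norm_num
  have e1 : Complex.exp (cc * (((1:ℝ)/N :ℝ):ℂ)) = Complex.exp (cc / N) := by
    push_cast; rw [mul_one_div]
  have e2 : Complex.exp (cc * (((2:ℝ)/N :ℝ):ℂ)) = Complex.exp (cc / N) ^ 2 := by
    rw [← Complex.exp_nat_mul]; push_cast; ring_nf
  have e3 : Complex.exp (cc * (((3:ℝ)/N :ℝ):ℂ)) = Complex.exp (cc / N) ^ 3 := by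
    rw [← Complex.exp_nat_mul]; push_cast; ring_nf
  rw [e0, e1, e2, e3]
  field_simp


/-- Let `N ≥ 5`, `I_1 = [0,(N−2)/N)`, `I_2 = [(N−2)/N,(N−1)/N)`,
`I_3 = [(N−1)/N,1)`, `Λ_1 = ⋃_{k=0}^{N−3}(Nℤ+k)` (i.e. `n % N ≤ N−3`),
`Λ_2 = Nℤ+(N−2)`, `Λ_3 = Nℤ+(N−1)`, and `S_k = [0,1)∖I_k`. Then
`E(S_1,Λ_1) ∪ E(S_2,Λ_2) ∪ E(S_3,Λ_3)` is not complete in `L²[0,1)`: some nonzero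
`f ∈ L²[0,1)` is orthogonal to every member of the system. -/
theorem stmt_14 (N : ℕ) (hN : 5 ≤ N) :
    ∃ f : L2, f ≠ 0 ∧
      (∀ n : ℤ, n % (N : ℤ) ≤ (N : ℤ) - 3 →
        (inner ℂ (expChar (Set.Ico (0 : ℝ) 1 \ Set.Ico (0 : ℝ) (((N : ℝ) - 2) / N))
          ((n : ℤ) : ℝ)) f : ℂ) = 0) ∧
      (∀ n : ℤ, n % (N : ℤ) = (N : ℤ) - 2 →
        (inner ℂ (expChar (Set.Ico (0 : ℝ) 1 \ Set.Ico (((N : ℝ) - 2) / N) (((N : ℝ) - 1) / N))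
          ((n : ℤ) : ℝ)) f : ℂ) = 0) ∧
      (∀ n : ℤ, n % (N : ℤ) = (N : ℤ) - 1 →
        (inner ℂ (expChar (Set.Ico (0 : ℝ) 1 \ Set.Ico (((N : ℝ) - 1) / N) 1)
          ((n : ℤ) : ℝ)) f : ℂ) = 0) := by
  have hN0 : (0:ℝ) < N := by positivity
  have hN5 : (5:ℝ) ≤ N := by exact_mod_cast hN
  have h3N1 : (3:ℝ)/N ≤ 1 := by rw [div_le_one hN0]; linarith
  refine ⟨toL2 (fw N), ?_, ?_, ?_, ?_⟩
  · -- f ≠ 0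
    intro h
    rw [toL2, dif_pos (memℒp_fw N)] at h
    have h1 := (memℒp_fw N).coeFn_toLp
    rw [h] at h1
    have hae : fw N =ᵐ[μ01] 0 := h1.symm.trans (MeasureTheory.Lp.coeFn_zero ℂ 2 μ01)
    have hzero : μ01 {x | fw N x ≠ 0} = 0 := by
      have := hae
      rw [Filter.EventuallyEq, MeasureTheory.ae_iff] at this
      simpa using this
    have hsub : Set.Ico ((2:ℝ)/N) (3/N) ⊆ {x | fw N x ≠ 0} := by
      intro x hx
      have hx1 : ¬ x < 1/N := not_lt.mpr (le_trans (by gcongr <;> norm_num) hx.1)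
      have hx2 : ¬ x < 2/N := not_lt.mpr hx.1
      simp only [Set.mem_setOf_eq, fw, Set.indicator_apply, Set.mem_Ico]
      rw [if_neg (fun h => hx1 h.2), if_neg (fun h => hx2 h.2), if_pos ⟨hx.1, hx.2⟩]
      norm_num
    have hpos : μ01 (Set.Ico ((2:ℝ)/N) (3/N)) ≠ 0 := by
      rw [μ01, Measure.restrict_apply measurableSet_Ico,
        Set.inter_eq_left.mpr (Set.Ico_subset_Ico (by positivity) h3N1),
        Real.volume_Ico]
      simp only [ne_eq, ENNReal.ofReal_eq_zero, not_le]
      have h32 : (3:ℝ)/N - 2/N = 1/N := by ring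
      rw [h32]
      positivity
    exact hpos (measure_mono_null hsub hzero)
  · -- first family : trivial since fw vanishes on S₁
    intro n _
    rw [expChar, inner_toL2 _ _
      (memℒp_expChar_aux _ (measurableSet_Ico.diff measurableSet_Ico) _) (memℒp_fw N)]
    have hpt : ∀ x : ℝ, (starRingEnd ℂ)
        ((Set.Ico (0:ℝ) 1 \ Set.Ico (0:ℝ) (((N:ℝ)-2)/N)).indicator
          (fun x => Complex.exp (2 * Real.pi * ((n:ℤ):ℝ) * x * Complex.I)) x) * fw N x = 0 := by
      intro x
      by_cases hx : x ∈ Set.Ico (0:ℝ) 1 \ Set.Ico (0:ℝ) (((N:ℝ)-2)/N)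
      · have h2 := hx.2
        simp only [Set.mem_Ico, not_and, not_lt] at h2
        have hge : ((N:ℝ)-2)/N ≤ x := h2 hx.1.1
        have h3 : (3:ℝ)/N ≤ ((N:ℝ)-2)/N := by gcongr <;> linarith
        rw [fw_eq_zero N hN (le_trans h3 hge), mul_zero]
      · rw [Set.indicator_of_notMem hx, map_zero, zero_mul]
    rw [integral_congr_ae (Filter.Eventually.of_forall hpt)]
    simp
  · -- second family
    intro n hn
    have hnne : n ≠ 0 := by
      intro h; rw [h, Int.zero_emod] at hn; omega
    have hsub : Set.Ico (0:ℝ) (3/N) ⊆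
        Set.Ico (0:ℝ) 1 \ Set.Ico (((N:ℝ)-2)/N) (((N:ℝ)-1)/N) := by
      intro x hx
      have h3 : (3:ℝ)/N ≤ ((N:ℝ)-2)/N := by gcongr <;> linarith
      exact ⟨⟨hx.1, lt_of_lt_of_le hx.2 h3N1⟩,
        fun hmem => absurd hmem.1 (not_le.mpr (lt_of_lt_of_le hx.2 h3))⟩
    rw [expChar, inner_toL2 _ _
      (memℒp_expChar_aux _ (measurableSet_Ico.diff measurableSet_Ico) _) (memℒp_fw N),
      integral_key N hN n hnne _ hsub,
      exp_alpha N hN n 2 (by exact_mod_cast hn)]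
    rw [show (omga N)^3 * ((omga N)^2 - 1)
        + (-(omga N + (omga N)^2)) * (((omga N)^2)^2 - (omga N)^2)
        + (((omga N)^2)^3 - ((omga N)^2)^2) = 0 from by ring, zero_div]
  · -- third family
    intro n hn
    have hnne : n ≠ 0 := by
      intro h; rw [h, Int.zero_emod] at hn; omega
    have hsub : Set.Ico (0:ℝ) (3/N) ⊆
        Set.Ico (0:ℝ) 1 \ Set.Ico (((N:ℝ)-1)/N) 1 := by
      intro x hx
      have h3 : (3:ℝ)/N ≤ ((N:ℝ)-1)/N := by gcongr <;> linarith
      exact ⟨⟨hx.1, lt_of_lt_of_le hx.2 h3N1⟩,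
        fun hmem => absurd hmem.1 (not_le.mpr (lt_of_lt_of_le hx.2 h3))⟩
    rw [expChar, inner_toL2 _ _
      (memℒp_expChar_aux _ (measurableSet_Ico.diff measurableSet_Ico) _) (memℒp_fw N),
      integral_key N hN n hnne _ hsub,
      exp_alpha N hN n 1 (by exact_mod_cast hn)]
    rw [show (omga N)^3 * ((omga N)^1 - 1)
        + (-(omga N + (omga N)^2)) * (((omga N)^1)^2 - (omga N)^1)
        + (((omga N)^1)^3 - ((omga N)^1)^2) = 0 from by ring, zero_div]
end
end

section
/- Let I_k = [(k−1)/4, k/4) for k = 1,2,3,4. Then the system E(I_1 ∪ I_3, 4ℤ ∪ (4ℤ+2)) is not a Riesz basis for L²(I_1 ∪ I_3), and the system E(I_2 ∪ I_4, (4ℤ+1) ∪ (4ℤ+3)) is not a Riesz basis for L²(I_2 ∪ I_4). -/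
open MeasureTheory Complex Real Set
open scoped Classical

noncomputable section

lemma integrable_of_bdd {f : ℝ → ℂ} (hm : AEStronglyMeasurable f μ01) (C : ℝ)
    (h : ∀ x, ‖f x‖ ≤ C) : Integrable f μ01 :=
  ⟨hm, HasFiniteIntegral.of_bounded (C := C) (Filter.Eventually.of_forall h)⟩

def gfun (p q r s : ℝ) (σ : ℂ) : ℝ → ℂ := fun x =>
  (Ico p q).indicator (fun _ => (1:ℂ)) x + σ * (Ico r s).indicator (fun _ => (1:ℂ)) x

lemma gfun_meas (p q r s : ℝ) (σ : ℂ) : Measurable (gfun p q r s σ) := by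
  apply Measurable.add
  · exact measurable_const.indicator measurableSet_Ico
  · exact (measurable_const.indicator measurableSet_Ico).const_mul σ

lemma indicator_one_norm_le (A : Set ℝ) (x : ℝ) :
    ‖A.indicator (fun _ => (1:ℂ)) x‖ ≤ 1 := by
  by_cases h : x ∈ A <;> simp [h]

lemma gfun_memℒp (p q r s : ℝ) (σ : ℂ) : MemLp (gfun p q r s σ) 2 μ01 := by
  refine MemLp.of_bound (gfun_meas p q r s σ).aestronglyMeasurable (1 + ‖σ‖)
    (Filter.Eventually.of_forall fun x => ?_)
  calc ‖gfun p q r s σ x‖ ≤ ‖(Ico p q).indicator (fun _ => (1:ℂ)) x‖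
        + ‖σ * (Ico r s).indicator (fun _ => (1:ℂ)) x‖ := norm_add_le _ _
    _ ≤ 1 + ‖σ‖ * 1 := by
        rw [norm_mul]
        gcongr
        · exact indicator_one_norm_le _ _
        · exact indicator_one_norm_le _ _
    _ = 1 + ‖σ‖ := by ring

lemma efun_norm_le (S : Set ℝ) (lam x : ℝ) :
    ‖S.indicator (fun x => Complex.exp (2 * Real.pi * lam * x * Complex.I)) x‖ ≤ 1 := by
  by_cases h : x ∈ S <;> simp [h, Complex.norm_exp]

lemma efun_memℒp (S : Set ℝ) (hS : MeasurableSet S) (lam : ℝ) :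
    MemLp (S.indicator fun x => Complex.exp (2 * Real.pi * lam * x * Complex.I)) 2 μ01 := by
  refine MemLp.of_bound ?_ 1 (Filter.Eventually.of_forall (efun_norm_le S lam))
  exact (Measurable.indicator (by fun_prop) hS).aestronglyMeasurable

lemma coeFn_toL2 {f : ℝ → ℂ} (h : MemLp f 2 μ01) : ⇑(toL2 f) =ᵐ[μ01] f := by
  rw [toL2, dif_pos h]; exact h.coeFn_toLp

lemma indicator_integral (a b : ℝ) (hab : a ≤ b) (hsub : Ico a b ⊆ Ico 0 1) (h : ℝ → ℂ) :
    ∫ x, (Ico a b).indicator h x ∂μ01 = ∫ x in a..b, h x := by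
  rw [μ01, integral_indicator measurableSet_Ico, Measure.restrict_restrict measurableSet_Ico,
    inter_eq_self_of_subset_left hsub, integral_Ico_eq_integral_Ioo,
    intervalIntegral.integral_of_le hab, integral_Ioc_eq_integral_Ioo]

lemma shift_integral (p q : ℝ) (lam : ℝ) (σ : ℂ)
    (hσ : Complex.exp (-(Real.pi * lam) * Complex.I) = -σ) :
    (∫ x in (p + 1/2)..(q + 1/2),
        (starRingEnd ℂ) (Complex.exp (2 * Real.pi * lam * x * Complex.I)))
      = (-σ) * ∫ x in p..q, (starRingEnd ℂ) (Complex.exp (2 * Real.pi * lam * x * Complex.I)) := by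
  rw [← intervalIntegral.integral_comp_add_right
      (fun x => (starRingEnd ℂ) (Complex.exp (2 * Real.pi * lam * x * Complex.I))) (1/2)]
  rw [← intervalIntegral.integral_const_mul]
  apply intervalIntegral.integral_congr
  intro x _
  have harg : (2 * (Real.pi:ℂ) * lam * ((x:ℝ) + 1/2 : ℝ) * Complex.I)
      = 2 * (Real.pi:ℂ) * lam * x * Complex.I + (Real.pi * lam : ℝ) * Complex.I := by
    push_cast; ring
  show (starRingEnd ℂ) (Complex.exp (2 * Real.pi * lam * ((x:ℝ) + 1/2 : ℝ) * Complex.I)) = _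
  rw [harg, Complex.exp_add, map_mul]
  have h2 : (starRingEnd ℂ) (Complex.exp ((Real.pi * lam : ℝ) * Complex.I))
      = Complex.exp (-(Real.pi * lam) * Complex.I) := by
    rw [← Complex.exp_conj, map_mul, Complex.conj_I, Complex.conj_ofReal]
    push_cast; ring_nf
  rw [h2, hσ]
  ring

lemma pointwise_eq (p q r s : ℝ) (hqr : q ≤ r) (σ : ℂ) (lam : ℝ) (x : ℝ) :
    (starRingEnd ℂ) ((Ico p q ∪ Ico r s).indicator
        (fun x => Complex.exp (2 * Real.pi * lam * x * Complex.I)) x) * gfun p q r s σ x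
    = (Ico p q).indicator
        (fun x => (starRingEnd ℂ) (Complex.exp (2 * Real.pi * lam * x * Complex.I))) x
      + σ * (Ico r s).indicator
        (fun x => (starRingEnd ℂ) (Complex.exp (2 * Real.pi * lam * x * Complex.I))) x := by
  unfold gfun
  by_cases h1 : x ∈ Ico p q
  · have h2 : x ∉ Ico r s := by
      intro h; exact absurd (lt_of_lt_of_le h1.2 (hqr.trans h.1)) (lt_irrefl x)
    have hu : x ∈ Ico p q ∪ Ico r s := Or.inl h1
    simp [h1, h2, hu]
  · by_cases h2 : x ∈ Ico r s
    · have hu : x ∈ Ico p q ∪ Ico r s := Or.inr h2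
      simp [h1, h2, hu]
      ring
    · have hu : x ∉ Ico p q ∪ Ico r s := by
        intro h; rcases h with h | h; exacts [h1 h, h2 h]
      simp [h1, h2, hu]

lemma key (lam p q r s : ℝ) (σ : ℂ)
    (hq : q = p + 1/4) (hr : r = p + 1/2) (hs : s = p + 3/4)
    (hp0 : 0 ≤ p) (hs1 : s ≤ 1)
    (hσ2 : σ * σ = 1)
    (hσ : Complex.exp (-(Real.pi * lam) * Complex.I) = -σ) :
    (inner ℂ (expChar (Ico p q ∪ Ico r s) lam) (toL2 (gfun p q r s σ)) : ℂ) = 0 := by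
  have hS : MeasurableSet (Ico p q ∪ Ico r s) :=
    measurableSet_Ico.union measurableSet_Ico
  have hE := efun_memℒp (Ico p q ∪ Ico r s) hS lam
  have hG := gfun_memℒp p q r s σ
  have hexp : expChar (Ico p q ∪ Ico r s) lam = hE.toLp _ := by
    rw [expChar, toL2, dif_pos hE]
  have hg : toL2 (gfun p q r s σ) = hG.toLp _ := by rw [toL2, dif_pos hG]
  rw [hexp, hg, MeasureTheory.L2.inner_def]
  have hcong : (fun x => (inner ℂ ((hE.toLp _ : L2) x) ((hG.toLp _ : L2) x) : ℂ))
      =ᵐ[μ01] fun x =>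
        (Ico p q).indicator
          (fun x => (starRingEnd ℂ) (Complex.exp (2 * Real.pi * lam * x * Complex.I))) x
        + σ * (Ico r s).indicator
          (fun x => (starRingEnd ℂ) (Complex.exp (2 * Real.pi * lam * x * Complex.I))) x := by
    filter_upwards [hE.coeFn_toLp, hG.coeFn_toLp] with x he hgg
    rw [RCLike.inner_apply', he, hgg, pointwise_eq p q r s (by rw [hq, hr]; linarith) σ lam x]
  rw [integral_congr_ae hcong]
  have hi1 : Integrable ((Ico p q).indicator
      (fun x => (starRingEnd ℂ) (Complex.exp (2 * Real.pi * lam * x * Complex.I)))) μ01 := by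
    refine integrable_of_bdd ?_ 1 ?_
    · exact (((RCLike.continuous_conj.comp (Complex.continuous_exp.comp
        ((continuous_const.mul Complex.continuous_ofReal).mul continuous_const))).measurable).indicator
        measurableSet_Ico).aestronglyMeasurable
    · intro x
      by_cases h : x ∈ Ico p q <;> simp [h, Complex.norm_exp]
  have hi2 : Integrable ((Ico r s).indicator
      (fun x => (starRingEnd ℂ) (Complex.exp (2 * Real.pi * lam * x * Complex.I)))) μ01 := by
    refine integrable_of_bdd ?_ 1 ?_
    · exact (((RCLike.continuous_conj.comp (Complex.continuous_exp.comp
        ((continuous_const.mul Complex.continuous_ofReal).mul continuous_const))).measurable).indicator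
        measurableSet_Ico).aestronglyMeasurable
    · intro x
      by_cases h : x ∈ Ico r s <;> simp [h, Complex.norm_exp]
  rw [integral_add hi1 (hi2.const_mul σ), integral_const_mul]
  rw [indicator_integral p q (by linarith) (fun x hx => ⟨by linarith [hx.1], by
        have := hx.2; rw [hq] at this; linarith⟩) _,
      indicator_integral r s (by rw [hr, hs]; linarith) (fun x hx => ⟨by
        have := hx.1; rw [hr] at this; linarith, by linarith [hx.2]⟩) _]
  have : (∫ x in r..s, (starRingEnd ℂ) (Complex.exp (2 * Real.pi * lam * x * Complex.I)))
      = (-σ) * ∫ x in p..q, (starRingEnd ℂ) (Complex.exp (2 * Real.pi * lam * x * Complex.I)) := by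
    rw [hr, hs, show p + 3/4 = (q : ℝ) + 1/2 by rw [hq]; ring]
    exact shift_integral p q lam σ hσ
  rw [this]
  have : σ * ((-σ) * ∫ x in p..q, (starRingEnd ℂ)
      (Complex.exp (2 * Real.pi * lam * x * Complex.I)))
      = -((σ * σ) * ∫ x in p..q, (starRingEnd ℂ)
      (Complex.exp (2 * Real.pi * lam * x * Complex.I))) := by ring
  rw [this, hσ2]
  ring

lemma toL2_gfun_ne_zero (p q r s : ℝ) (σ : ℂ) (hpq : p < q) (hqr : q ≤ r)
    (h0 : 0 ≤ p) (h1 : q ≤ 1) : toL2 (gfun p q r s σ) ≠ 0 := by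
  intro h
  have hG := gfun_memℒp p q r s σ
  rw [toL2, dif_pos hG] at h
  rw [← MemLp.toLp_zero (MemLp.zero : MemLp (0 : ℝ → ℂ) 2 μ01)] at h
  have hae : gfun p q r s σ =ᵐ[μ01] 0 := (MemLp.toLp_eq_toLp_iff hG MemLp.zero).mp h
  have hzero : μ01 {x | gfun p q r s σ x ≠ 0} = 0 := by
    have : ∀ᵐ x ∂μ01, gfun p q r s σ x = 0 := hae
    exact this
  have hsub : Ico p q ⊆ {x | gfun p q r s σ x ≠ 0} := by
    intro x hx
    have hx2 : x ∉ Ico r s := fun h' =>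
      absurd (lt_of_lt_of_le hx.2 (hqr.trans h'.1)) (lt_irrefl x)
    simp only [mem_setOf_eq, gfun, indicator_of_mem hx, indicator_of_notMem hx2]
    simp
  have hle : μ01 (Ico p q) = 0 :=
    le_antisymm (hzero ▸ measure_mono hsub) (zero_le (a := μ01 (Ico p q)))
  rw [μ01, Measure.restrict_apply measurableSet_Ico,
    inter_eq_self_of_subset_left (show Ico p q ⊆ Ico 0 1 from
      fun x hx => ⟨le_trans h0 hx.1, lt_of_lt_of_le hx.2 h1⟩),
    Real.volume_Ico] at hle
  rw [ENNReal.ofReal_eq_zero] at hle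
  linarith

lemma toL2_gfun_mem_L2on (p q r s : ℝ) (σ : ℂ) :
    toL2 (gfun p q r s σ) ∈ L2on (Ico p q ∪ Ico r s) := by
  have hG := gfun_memℒp p q r s σ
  filter_upwards [coeFn_toL2 hG] with x hx hxS
  rw [hx]
  have h1 : x ∉ Ico p q := fun h => hxS (Or.inl h)
  have h2 : x ∉ Ico r s := fun h => hxS (Or.inr h)
  simp [gfun, indicator_of_notMem h1, indicator_of_notMem h2]

lemma not_mem_closure_span {ι : Type*} (f : ι → L2) (g : L2) (hg : g ≠ 0)
    (h : ∀ i, (inner ℂ (f i) g : ℂ) = 0) :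
    g ∉ closure ((Submodule.span ℂ (Set.range f) : Submodule ℂ L2) : Set L2) := by
  intro hmem
  set K := Submodule.span ℂ (Set.range f) with hK
  have h1 : g ∈ Kᗮ := by
    rw [Submodule.mem_orthogonal]
    intro u hu
    induction hu using Submodule.span_induction with
    | mem x hx => obtain ⟨i, rfl⟩ := hx; exact h i
    | zero => simp
    | add u v hu hv ihu ihv => rw [inner_add_left, ihu, ihv, add_zero]
    | smul c u hu ihu => rw [inner_smul_left, ihu, mul_zero]
  have h2 : g ∈ (Kᗮ)ᗮ := by
    have hsub : (K : Set L2) ⊆ ((Kᗮᗮ : Submodule ℂ L2) : Set L2) :=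
      K.le_orthogonal_orthogonal
    exact closure_minimal hsub (Kᗮ).isClosed_orthogonal hmem
  have hz : (inner ℂ g g : ℂ) = 0 := (Submodule.mem_orthogonal _ g).mp h2 g h1
  exact hg (inner_self_eq_zero.mp hz)

lemma exp_even (n : ℤ) (hn : n % 4 = 0 ∨ n % 4 = 2) :
    Complex.exp (-(Real.pi * ((n : ℤ) : ℝ)) * Complex.I) = -(-1 : ℂ) := by
  obtain ⟨m, hm⟩ : ∃ m : ℤ, n = 2 * m := ⟨n / 2, by omega⟩
  have : (-(Real.pi * ((n : ℤ) : ℝ)) : ℂ) * Complex.I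
      = (-m : ℤ) * (2 * (Real.pi : ℂ) * Complex.I) := by
    rw [hm]; push_cast; ring
  rw [this, Complex.exp_int_mul_two_pi_mul_I]
  norm_num

lemma exp_odd (n : ℤ) (hn : n % 4 = 1 ∨ n % 4 = 3) :
    Complex.exp (-(Real.pi * ((n : ℤ) : ℝ)) * Complex.I) = -(1 : ℂ) := by
  obtain ⟨m, hm⟩ : ∃ m : ℤ, n = 2 * m + 1 := ⟨n / 2, by omega⟩
  have : (-(Real.pi * ((n : ℤ) : ℝ)) : ℂ) * Complex.I
      = (-m : ℤ) * (2 * (Real.pi : ℂ) * Complex.I) + -((Real.pi : ℂ) * Complex.I) := by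
    rw [hm]; push_cast; ring
  rw [this, Complex.exp_add, Complex.exp_int_mul_two_pi_mul_I, one_mul,
    Complex.exp_neg, Complex.exp_pi_mul_I]
  norm_num


/-- With `I_k = [(k−1)/4, k/4)`, the system
`E(I_1 ∪ I_3, 4ℤ ∪ (4ℤ+2))` is not a Riesz basis for `L²(I_1 ∪ I_3)`, and
`E(I_2 ∪ I_4, (4ℤ+1) ∪ (4ℤ+3))` is not a Riesz basis for `L²(I_2 ∪ I_4)`. -/
theorem stmt_16 :
    ¬ IsRieszBasis
        (fun l : {n : ℤ // n % 4 = 0 ∨ n % 4 = 2} =>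
          expChar (Set.Ico (0 : ℝ) (1/4) ∪ Set.Ico (2/4 : ℝ) (3/4)) (((l : ℤ) : ℝ)))
        (L2on (Set.Ico (0 : ℝ) (1/4) ∪ Set.Ico (2/4 : ℝ) (3/4))) ∧
    ¬ IsRieszBasis
        (fun l : {n : ℤ // n % 4 = 1 ∨ n % 4 = 3} =>
          expChar (Set.Ico (1/4 : ℝ) (2/4) ∪ Set.Ico (3/4 : ℝ) 1) (((l : ℤ) : ℝ)))
        (L2on (Set.Ico (1/4 : ℝ) (2/4) ∪ Set.Ico (3/4 : ℝ) 1)) := by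
  constructor
  · rintro ⟨-, hspan⟩
    have hg0 : toL2 (gfun 0 (1/4) (2/4) (3/4) (-1)) ≠ 0 :=
      toL2_gfun_ne_zero 0 (1/4) (2/4) (3/4) (-1) (by norm_num) (by norm_num)
        le_rfl (by norm_num)
    have hmem : toL2 (gfun 0 (1/4) (2/4) (3/4) (-1))
        ∈ L2on (Set.Ico (0 : ℝ) (1/4) ∪ Set.Ico (2/4 : ℝ) (3/4)) :=
      toL2_gfun_mem_L2on 0 (1/4) (2/4) (3/4) (-1)
    rw [← hspan] at hmem
    refine not_mem_closure_span _ _ hg0 (fun l => ?_) hmem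
    exact key ((l : ℤ) : ℝ) 0 (1/4) (2/4) (3/4) (-1) (by norm_num) (by norm_num)
      (by norm_num) le_rfl (by norm_num) (by norm_num) (exp_even (l : ℤ) l.2)
  · rintro ⟨-, hspan⟩
    have hg0 : toL2 (gfun (1/4) (2/4) (3/4) 1 1) ≠ 0 :=
      toL2_gfun_ne_zero (1/4) (2/4) (3/4) 1 1 (by norm_num) (by norm_num)
        (by norm_num) (by norm_num)
    have hmem : toL2 (gfun (1/4) (2/4) (3/4) 1 1)
        ∈ L2on (Set.Ico (1/4 : ℝ) (2/4) ∪ Set.Ico (3/4 : ℝ) 1) :=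
      toL2_gfun_mem_L2on (1/4) (2/4) (3/4) 1 1
    rw [← hspan] at hmem
    refine not_mem_closure_span _ _ hg0 (fun l => ?_) hmem
    exact key ((l : ℤ) : ℝ) (1/4) (2/4) (3/4) 1 1 (by norm_num) (by norm_num)
      (by norm_num) (by norm_num) le_rfl (by norm_num) (exp_odd (l : ℤ) l.2)
end
end
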